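/- arXiv:1101.3485 — 6 statements merged into one kernel-verified Lean document; each statement's English description precedes it below -/
import Mathlib

section
/- Let G(s) = C(sE - A)^{-1}B with E ∈ ℝ^{n×n} nonsingular, A ∈ ℝ^{n×n}, B ∈ ℝ^{n×m}, C ∈ ℝ^{p×n}. Given distinct interpolation points s_1,...,s_r ∈ ℂ and tangent directions b_1,...,b_r ∈ ℂ^m, define V_r with i-th column (s_i E - A)^{-1} B b_i. Then for any W_r ∈ ℂ^{n×r}, the reduced system G_r(s) = C_r(sE_r - A_r)^{-1}B_r with E_r = W_r^T E V_r, A_r = W_r^T A V_r, B_r = W_r^T B, C_r = C V_r satisfies G(s_i) b_i = G_r(s_i) b_i for all i = 1,...,r, provided s_i E - A and s_i E_r - A_r are invertible for each i. -/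
open Matrix

noncomputable section

theorem stmt0 (n m p r : ℕ)
    (E A : Matrix (Fin n) (Fin n) ℝ) (B : Matrix (Fin n) (Fin m) ℝ)
    (C : Matrix (Fin p) (Fin n) ℝ) (hE : IsUnit E.det)
    (s : Fin r → ℂ) (hs : Function.Injective s)
    (b : Fin r → Fin m → ℂ)
    (V W : Matrix (Fin n) (Fin r) ℂ)
    (hV : ∀ i j, V j i =
      (((s i • E.map Complex.ofReal - A.map Complex.ofReal)⁻¹ * B.map Complex.ofReal) *ᵥ b i) j)
    (hinv : ∀ i, IsUnit (s i • E.map Complex.ofReal - A.map Complex.ofReal).det)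
    (hinvr : ∀ i, IsUnit (s i • (Wᵀ * E.map Complex.ofReal * V) - Wᵀ * A.map Complex.ofReal * V).det) :
    ∀ i, (C.map Complex.ofReal *
          (s i • E.map Complex.ofReal - A.map Complex.ofReal)⁻¹ * B.map Complex.ofReal) *ᵥ b i
      = ((C.map Complex.ofReal * V) *
          (s i • (Wᵀ * E.map Complex.ofReal * V) - Wᵀ * A.map Complex.ofReal * V)⁻¹ *
          (Wᵀ * B.map Complex.ofReal)) *ᵥ b i := by
  intro i
  set E' := E.map Complex.ofReal
  set A' := A.map Complex.ofReal
  set B' := B.map Complex.ofReal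
  set C' := C.map Complex.ofReal
  set K := s i • E' - A' with hKdef
  have hK : IsUnit K.det := hinv i
  have hKr : s i • (Wᵀ * E' * V) - Wᵀ * A' * V = Wᵀ * K * V := by
    simp [hKdef, Matrix.sub_mul, Matrix.mul_sub, Matrix.mul_smul, Matrix.smul_mul]
  have hcol : V *ᵥ Pi.single i 1 = (K⁻¹ * B') *ᵥ (b i) := by
    funext j
    have : (V *ᵥ Pi.single i 1) j = V j i := by
      simp [Matrix.mulVec_single]
    rw [this, hV i j]
  have h1 : (Wᵀ * K * V) *ᵥ Pi.single i 1 = (Wᵀ * B') *ᵥ b i := by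
    rw [← Matrix.mulVec_mulVec, hcol, Matrix.mulVec_mulVec, Matrix.mul_assoc,
      ← Matrix.mul_assoc K, Matrix.mul_nonsing_inv _ hK, Matrix.one_mul]
  have hKru : IsUnit (Wᵀ * K * V).det := hKr ▸ hinvr i
  have h2 : (Wᵀ * K * V)⁻¹ *ᵥ ((Wᵀ * B') *ᵥ b i) = Pi.single i 1 := by
    rw [← h1, Matrix.mulVec_mulVec, Matrix.nonsing_inv_mul _ hKru, Matrix.one_mulVec]
  calc (C' * K⁻¹ * B') *ᵥ b i
      = C' *ᵥ ((K⁻¹ * B') *ᵥ b i) := by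
        rw [Matrix.mulVec_mulVec, Matrix.mul_assoc]
    _ = (C' * V) *ᵥ Pi.single i 1 := by
        rw [← hcol, Matrix.mulVec_mulVec]
    _ = ((C' * V) * (s i • (Wᵀ * E' * V) - Wᵀ * A' * V)⁻¹ * (Wᵀ * B')) *ᵥ b i := by
        rw [hKr, ← h2, Matrix.mulVec_mulVec, Matrix.mulVec_mulVec, Matrix.mul_assoc]
end
end

section
/- Let G(s) = C(sE-A)^{-1}B, ŝ ∈ ℂ, b̂ ∈ ℂ^m, and suppose V_r ∈ ℂ^{n×r} satisfies ((ŝE - A)^{-1}E)^{k-1}(ŝE - A)^{-1}B b̂ ∈ Range(V_r) for k = 1,...,N. Then for any W_r ∈ ℂ^{n×r} (with ŝE - A and ŝE_r - A_r invertible), the reduced model defined by E_r = W_r^T E V_r, A_r = W_r^T A V_r, B_r = W_r^T B, C_r = C V_r satisfies G^{(ℓ)}(ŝ) b̂ = G_r^{(ℓ)}(ŝ) b̂ for ℓ = 0,...,N-1, where G^{(ℓ)} denotes the ℓ-th derivative of the transfer function. -/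
open Matrix
open scoped ENNReal NNReal
set_option maxHeartbeats 1000000

noncomputable section

section Aux

attribute [local instance] Matrix.linftyOpNormedRing Matrix.linftyOpNormedAlgebra

@[reducible] def auxCLMSeminormed (d q : ℕ) :
    SeminormedAddCommGroup (Matrix (Fin d) (Fin d) ℂ →L[ℂ] (Fin q → ℂ)) :=
  ContinuousLinearMap.toSeminormedAddCommGroup

attribute [local instance] auxCLMSeminormed

/-- Power series expansion of `z ↦ (C (zP - Q)⁻¹ B) *ᵥ b` around `sh`. -/
lemma aux_series (d q m : ℕ) (P Q : Matrix (Fin d) (Fin d) ℂ)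
    (Cc : Matrix (Fin q) (Fin d) ℂ) (Bc : Matrix (Fin d) (Fin m) ℂ) (b : Fin m → ℂ)
    (sh : ℂ) (h : IsUnit (sh • P - Q).det) :
    ∃ rr : ℝ≥0∞, HasFPowerSeriesOnBall (fun z : ℂ => (Cc * (z • P - Q)⁻¹ * Bc) *ᵥ b)
      (fun k => ContinuousMultilinearMap.mkPiRing ℂ (Fin k)
        ((-1 : ℂ) ^ k •
          ((Cc * (((sh • P - Q)⁻¹ * P) ^ k * ((sh • P - Q)⁻¹ * Bc))) *ᵥ b))) sh rr := by
  haveI : CompleteSpace (Matrix (Fin d) (Fin d) ℂ) := FiniteDimensional.complete ℂ _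
  set K : Matrix (Fin d) (Fin d) ℂ := (sh • P - Q)⁻¹ with hKdef
  set X : Matrix (Fin d) (Fin d) ℂ := K * P with hXdef
  have hMK : (sh • P - Q) * K = 1 := Matrix.mul_nonsing_inv _ h
  -- the continuous linear map M ↦ (Cc * (M * (K * Bc))) *ᵥ b
  let L0 : Matrix (Fin d) (Fin d) ℂ →ₗ[ℂ] (Fin q → ℂ) :=
    { toFun := fun M => (Cc * (M * (K * Bc))) *ᵥ b
      map_add' := by
        intro M N
        simp [Matrix.add_mul, Matrix.mul_add, Matrix.add_mulVec]
      map_smul' := by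
        intro c M
        simp [Matrix.smul_mul, Matrix.mul_smul, Matrix.smul_mulVec] }
  let L : Matrix (Fin d) (Fin d) ℂ →L[ℂ] (Fin q → ℂ) := LinearMap.toContinuousLinearMap L0
  have hL : ∀ M, L M = (Cc * (M * (K * Bc))) *ᵥ b := fun M => rfl
  set a : ℝ := ‖X‖ with hadef
  have ha : 0 ≤ a := norm_nonneg _
  have hapos : (0:ℝ) < a + 1 := by positivity
  set rr : ℝ≥0 := ⟨(a+1)⁻¹, by positivity⟩ with hrrdef
  have hrrval : (rr : ℝ) = (a+1)⁻¹ := rfl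
  refine ⟨(rr : ℝ≥0∞), ?_, ?_, ?_⟩
  · -- radius bound
    apply FormalMultilinearSeries.le_radius_of_bound _ (‖L‖ * (1 + ‖(1 : Matrix (Fin d) (Fin d) ℂ)‖))
    intro k
    rw [ContinuousMultilinearMap.norm_mkPiRing]
    have hcoef : ((-1 : ℂ) ^ k • ((Cc * (X ^ k * (K * Bc))) *ᵥ b)) = (-1:ℂ)^k • L (X ^ k) := rfl
    rw [hcoef, norm_smul]
    have h1 : ‖(-1 : ℂ) ^ k‖ = 1 := by
      rw [norm_pow, norm_neg, norm_one, one_pow]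
    rw [h1, one_mul]
    have hrr_nonneg : (0:ℝ) ≤ (rr:ℝ) := rr.2
    cases k with
    | zero =>
      simp only [pow_zero, mul_one]
      have : ‖L 1‖ ≤ ‖L‖ * ‖(1 : Matrix (Fin d) (Fin d) ℂ)‖ := L.le_opNorm (1 : Matrix (Fin d) (Fin d) ℂ)
      nlinarith [norm_nonneg L, norm_nonneg (1 : Matrix (Fin d) (Fin d) ℂ)]
    | succ k =>
      have hX : ‖X ^ (k+1)‖ ≤ a ^ (k+1) := norm_pow_le' X (Nat.succ_pos k)
      have hLe : ‖L (X ^ (k+1))‖ ≤ ‖L‖ * a ^ (k+1) :=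
        (show ‖L (X ^ (k+1))‖ ≤ ‖L‖ * ‖X ^ (k+1)‖ from L.le_opNorm _).trans (by
          have := norm_nonneg L
          nlinarith [pow_nonneg ha (k+1), norm_nonneg (X ^ (k+1))])
      have har : a * (rr:ℝ) ≤ 1 := by
        rw [hrrval]
        rw [mul_inv_le_iff₀ hapos]
        linarith
      have hpow : (a * (rr:ℝ)) ^ (k+1) ≤ 1 :=
        pow_le_one₀ (by positivity) har
      have : ‖L (X ^ (k+1))‖ * (rr:ℝ) ^ (k+1) ≤ ‖L‖ * ((a * (rr:ℝ)) ^ (k+1)) := by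
        rw [mul_pow]
        have hrp : (0:ℝ) ≤ (rr:ℝ) ^ (k+1) := pow_nonneg hrr_nonneg _
        calc ‖L (X ^ (k+1))‖ * (rr:ℝ) ^ (k+1) ≤ (‖L‖ * a ^ (k+1)) * (rr:ℝ) ^ (k+1) :=
              mul_le_mul_of_nonneg_right hLe hrp
          _ = ‖L‖ * (a ^ (k+1) * (rr:ℝ) ^ (k+1)) := by ring
      refine this.trans ?_
      have hLn : (0:ℝ) ≤ ‖L‖ := norm_nonneg _
      nlinarith [norm_nonneg (1 : Matrix (Fin d) (Fin d) ℂ)]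
  · -- positivity of radius
    rw [show ((0:ℝ≥0∞) = ((0:ℝ≥0):ℝ≥0∞)) from rfl]
    rw [ENNReal.coe_lt_coe]
    rw [← NNReal.coe_lt_coe, hrrval]
    positivity
  · -- the sum
    intro y hy
    have hy' : ‖y‖ < (a+1)⁻¹ := by
      rw [EMetric.mem_ball, edist_zero_right] at hy
      have := hy
      rw [show (‖y‖ₑ : ℝ≥0∞) = ((‖y‖₊ : ℝ≥0) : ℝ≥0∞) from rfl] at this
      rw [ENNReal.coe_lt_coe, ← NNReal.coe_lt_coe] at this
      simpa [hrrval] using this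
    set x : Matrix (Fin d) (Fin d) ℂ := (-y) • X with hxdef
    have hx1 : ‖x‖ < 1 := by
      rw [hxdef, norm_smul, norm_neg]
      have h2 : ‖y‖ * a ≤ ‖y‖ * (a + 1) :=
        mul_le_mul_of_nonneg_left (by linarith) (norm_nonneg y)
      have h3 : ‖y‖ * (a+1) < (a+1)⁻¹ * (a+1) :=
        mul_lt_mul_of_pos_right hy' hapos
      rw [inv_mul_cancel₀ (ne_of_gt hapos)] at h3
      linarith
    have hs : HasSum (fun i : ℕ => x ^ i) (Ring.inverse (1 - x)) :=
      hasSum_geom_series_inverse x hx1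
    have hs2 : HasSum (fun i : ℕ => L (x ^ i)) (L (Ring.inverse (1 - x))) := L.hasSum hs
    have hterm : ∀ k : ℕ,
        (ContinuousMultilinearMap.mkPiRing ℂ (Fin k)
          ((-1 : ℂ) ^ k • ((Cc * (X ^ k * (K * Bc))) *ᵥ b))) (fun _ => y) = L (x ^ k) := by
      intro k
      rw [ContinuousMultilinearMap.mkPiRing_apply]
      have hxk : x ^ k = ((-y) ^ k) • X ^ k := smul_pow _ _ _
      rw [hxk, L.map_smul]
      have : L (X ^ k) = (Cc * (X ^ k * (K * Bc))) *ᵥ b := rfl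
      rw [this]
      rw [Finset.prod_const]
      simp only [Finset.card_univ, Fintype.card_fin]
      rw [smul_smul]
      congr 1
      ring
    have hval : (Cc * ((sh + y) • P - Q)⁻¹ * Bc) *ᵥ b
        = L (Ring.inverse (1 - x)) := by
      have key : (sh + y) • P - Q = (sh • P - Q) * (1 - x) := by
        have h1x : (1 : Matrix (Fin d) (Fin d) ℂ) - x = 1 + y • X := by
          rw [hxdef, neg_smul, sub_neg_eq_add]
        rw [h1x, Matrix.mul_add, Matrix.mul_one, Matrix.mul_smul, hXdef,
          ← Matrix.mul_assoc, hMK, Matrix.one_mul, add_smul]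
        abel
      have hinv1x : (1 - x)⁻¹ = Ring.inverse (1 - x) :=
        Matrix.nonsing_inv_eq_ringInverse _
      rw [key, Matrix.mul_inv_rev, hinv1x, ← hKdef, hL]
      simp only [Matrix.mul_assoc]
    rw [hval]
    exact hs2.congr_fun fun k => hterm k

end Aux

/-- The key algebraic identity: moments of reduced model match through `V`. -/
lemma aux_alg (n m r N : ℕ) (Ec Ac : Matrix (Fin n) (Fin n) ℂ)
    (Bc : Matrix (Fin n) (Fin m) ℂ) (sh : ℂ) (bh : Fin m → ℂ)
    (V W : Matrix (Fin n) (Fin r) ℂ)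
    (hmem : ∀ k, 1 ≤ k → k ≤ N →
      ((((sh • Ec - Ac)⁻¹ * Ec) ^ (k - 1) * (sh • Ec - Ac)⁻¹ * Bc) *ᵥ bh)
        ∈ Set.range V.mulVec)
    (hinv : IsUnit (sh • Ec - Ac).det)
    (hinvr : IsUnit (sh • (Wᵀ * Ec * V) - Wᵀ * Ac * V).det) :
    ∀ k, k < N →
      V *ᵥ ((((sh • (Wᵀ * Ec * V) - Wᵀ * Ac * V)⁻¹ * (Wᵀ * Ec * V)) ^ k *
          ((sh • (Wᵀ * Ec * V) - Wᵀ * Ac * V)⁻¹ * (Wᵀ * Bc))) *ᵥ bh)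
        = ((((sh • Ec - Ac)⁻¹ * Ec) ^ k * ((sh • Ec - Ac)⁻¹ * Bc)) *ᵥ bh) := by
  set M : Matrix (Fin n) (Fin n) ℂ := sh • Ec - Ac with hMdef
  set Mr : Matrix (Fin r) (Fin r) ℂ := sh • (Wᵀ * Ec * V) - Wᵀ * Ac * V with hMrdef
  set K : Matrix (Fin n) (Fin n) ℂ := M⁻¹ with hKdef
  set Kr : Matrix (Fin r) (Fin r) ℂ := Mr⁻¹ with hKrdef
  have hMr_eq : Mr = Wᵀ * M * V := by
    rw [hMrdef, hMdef, Matrix.mul_sub, Matrix.sub_mul, Matrix.mul_smul, Matrix.smul_mul]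
  have hMK : M * K = 1 := Matrix.mul_nonsing_inv _ hinv
  have hKrMr : Kr * Mr = 1 := Matrix.nonsing_inv_mul _ hinvr
  have hrecov : ∀ x : Fin r → ℂ, x = Kr *ᵥ (Mr *ᵥ x) := by
    intro x
    rw [Matrix.mulVec_mulVec, hKrMr, Matrix.one_mulVec]
  intro k
  induction k with
  | zero =>
    intro hk
    obtain ⟨x, hx⟩ := hmem 1 le_rfl (by omega)
    simp only [show (1 - 1 : ℕ) = 0 from rfl, pow_zero, Matrix.one_mul] at hx
    simp only [pow_zero, Matrix.one_mul]
    -- hx : V *ᵥ x = (K * Bc) *ᵥ bh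
    have e1 : M * (K * Bc) = Bc := by rw [← Matrix.mul_assoc, hMK, Matrix.one_mul]
    have h1 : Mr *ᵥ x = (Wᵀ * Bc) *ᵥ bh := by
      rw [hMr_eq, ← Matrix.mulVec_mulVec, hx]
      simp [Matrix.mulVec_mulVec, Matrix.mul_assoc, e1]
    have h2 : x = (Kr * (Wᵀ * Bc)) *ᵥ bh := by
      conv_lhs => rw [hrecov x]
      rw [h1, Matrix.mulVec_mulVec]
    rw [← h2, hx]
  | succ k ih =>
    intro hk
    have ihk := ih (by omega)
    set X : Matrix (Fin n) (Fin n) ℂ := K * Ec with hXdef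
    set Y : Matrix (Fin r) (Fin r) ℂ := Kr * (Wᵀ * Ec * V) with hYdef
    set u : Fin r → ℂ := ((Y ^ k * (Kr * (Wᵀ * Bc))) *ᵥ bh) with hudef
    set v : Fin n → ℂ := ((X ^ k * (K * Bc)) *ᵥ bh) with hvdef
    obtain ⟨x, hx⟩ := hmem (k + 2) (by omega) (by omega)
    have hx' : V *ᵥ x = X *ᵥ v := by
      rw [hx, hvdef, Matrix.mulVec_mulVec]
      congr 1
      rw [show (k + 2 - 1 : ℕ) = k + 1 from rfl, pow_succ']
      simp [Matrix.mul_assoc]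
    have e2 : M * X = Ec := by rw [hXdef, ← Matrix.mul_assoc, hMK, Matrix.one_mul]
    have hMVx : M *ᵥ (V *ᵥ x) = (Ec * V) *ᵥ u := by
      rw [hx', Matrix.mulVec_mulVec, e2, ← ihk, Matrix.mulVec_mulVec]
    have hMrx : Mr *ᵥ x = (Wᵀ * (Ec * V)) *ᵥ u := by
      rw [hMr_eq, ← Matrix.mulVec_mulVec, ← Matrix.mulVec_mulVec (V *ᵥ x) Wᵀ M, hMVx,
        Matrix.mulVec_mulVec]
    have hxu : x = Y *ᵥ u := by
      conv_lhs => rw [hrecov x]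
      rw [hMrx, Matrix.mulVec_mulVec, hYdef, Matrix.mul_assoc]
    calc V *ᵥ ((Y ^ (k + 1) * (Kr * (Wᵀ * Bc))) *ᵥ bh)
        = V *ᵥ (Y *ᵥ u) := by
          have hu1 : (Y ^ (k + 1) * (Kr * (Wᵀ * Bc))) *ᵥ bh = Y *ᵥ u := by
            rw [hudef, Matrix.mulVec_mulVec, ← Matrix.mul_assoc Y (Y ^ k) (Kr * (Wᵀ * Bc)),
              ← pow_succ']
          rw [hu1]
      _ = V *ᵥ x := by rw [← hxu]
      _ = X *ᵥ v := hx'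
      _ = (X ^ (k + 1) * (K * Bc)) *ᵥ bh := by
          rw [hvdef, Matrix.mulVec_mulVec, ← Matrix.mul_assoc X (X ^ k) (K * Bc), ← pow_succ']

theorem stmt1 (n m p r N : ℕ)
    (E A : Matrix (Fin n) (Fin n) ℝ) (B : Matrix (Fin n) (Fin m) ℝ)
    (C : Matrix (Fin p) (Fin n) ℝ) (hE : IsUnit E.det)
    (sh : ℂ) (bh : Fin m → ℂ)
    (V W : Matrix (Fin n) (Fin r) ℂ)
    (hmem : ∀ k, 1 ≤ k → k ≤ N →
      ((((sh • E.map Complex.ofReal - A.map Complex.ofReal)⁻¹ * E.map Complex.ofReal) ^ (k - 1) *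
        (sh • E.map Complex.ofReal - A.map Complex.ofReal)⁻¹ * B.map Complex.ofReal) *ᵥ bh)
        ∈ Set.range V.mulVec)
    (hinv : IsUnit (sh • E.map Complex.ofReal - A.map Complex.ofReal).det)
    (hinvr : IsUnit (sh • (Wᵀ * E.map Complex.ofReal * V) - Wᵀ * A.map Complex.ofReal * V).det) :
    ∀ ℓ, ℓ < N →
      iteratedDeriv ℓ (fun z : ℂ =>
        (C.map Complex.ofReal * (z • E.map Complex.ofReal - A.map Complex.ofReal)⁻¹ *
          B.map Complex.ofReal) *ᵥ bh) sh
      = iteratedDeriv ℓ (fun z : ℂ =>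
        ((C.map Complex.ofReal * V) *
          (z • (Wᵀ * E.map Complex.ofReal * V) - Wᵀ * A.map Complex.ofReal * V)⁻¹ *
          (Wᵀ * B.map Complex.ofReal)) *ᵥ bh) sh := by
  intro ℓ hℓ
  set Ec := E.map Complex.ofReal
  set Ac := A.map Complex.ofReal
  set Bc := B.map Complex.ofReal
  set Cc := C.map Complex.ofReal
  obtain ⟨r1, h1⟩ := aux_series n p m Ec Ac Cc Bc bh sh hinv
  obtain ⟨r2, h2⟩ := aux_series r p m (Wᵀ * Ec * V) (Wᵀ * Ac * V) (Cc * V) (Wᵀ * Bc) bh sh hinvr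
  rw [iteratedDeriv_eq_iteratedFDeriv, iteratedDeriv_eq_iteratedFDeriv,
    ← h1.factorial_smul (1:ℂ) ℓ, ← h2.factorial_smul (1:ℂ) ℓ]
  congr 1
  rw [ContinuousMultilinearMap.mkPiRing_apply, ContinuousMultilinearMap.mkPiRing_apply]
  simp only [Finset.prod_const, Finset.card_univ, Fintype.card_fin, one_pow, one_smul]
  congr 1
  have halg := aux_alg n m r N Ec Ac Bc sh bh V W hmem hinv hinvr ℓ hℓ
  set Z1 := ((sh • Ec - Ac)⁻¹ * Ec) ^ ℓ * ((sh • Ec - Ac)⁻¹ * Bc) with hZ1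
  set Z2 := ((sh • (Wᵀ * Ec * V) - Wᵀ * Ac * V)⁻¹ * (Wᵀ * Ec * V)) ^ ℓ *
      ((sh • (Wᵀ * Ec * V) - Wᵀ * Ac * V)⁻¹ * (Wᵀ * Bc)) with hZ2
  rw [← Matrix.mulVec_mulVec bh Cc Z1, ← Matrix.mulVec_mulVec bh (Cc * V) Z2, ← halg,
    Matrix.mulVec_mulVec]

end
end

section
/- Let (J,R,Q,B) define a port-Hamiltonian system (J skew-symmetric, R symmetric PSD, Q symmetric positive definite, B ∈ ℝ^{n×m}). Let V̂_r ∈ ℝ^{n×r} have full column rank and define Ŵ_r = Q V̂_r (V̂_r^T Q V̂_r)^{-1}, J_r = Ŵ_r^T J Ŵ_r, R_r = Ŵ_r^T R Ŵ_r, Q_r = V̂_r^T Q V̂_r, B_r = Ŵ_r^T B. Then J_r is skew-symmetric, R_r is symmetric positive semidefinite, Q_r is symmetric positive definite, and Ŵ_r^T V̂_r = I_r. -/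
open Matrix

noncomputable section

lemma mulVec_inj_of_rank {n r : ℕ} (V : Matrix (Fin n) (Fin r) ℝ) (hV : V.rank = r) :
    ∀ x : Fin r → ℝ, V.mulVec x = 0 → x = 0 := by
  have hker : LinearMap.ker V.mulVecLin = ⊥ := by
    have h1 := LinearMap.finrank_range_add_finrank_ker V.mulVecLin
    rw [Matrix.rank] at hV
    rw [hV] at h1
    simp only [Module.finrank_pi, Fintype.card_fin] at h1
    have h2 : Module.finrank ℝ (LinearMap.ker V.mulVecLin) = 0 := by omega
    exact Submodule.finrank_eq_zero.mp h2
  intro x hx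
  have : x ∈ LinearMap.ker V.mulVecLin := by
    simpa [Matrix.mulVecLin_apply] using hx
  simpa [hker] using this

theorem stmt7 (n m r : ℕ) (J R Q : Matrix (Fin n) (Fin n) ℝ) (B : Matrix (Fin n) (Fin m) ℝ)
    (hJ : Jᵀ = -J) (hR : R.PosSemidef) (hQ : Q.PosDef)
    (V : Matrix (Fin n) (Fin r) ℝ) (hV : V.rank = r) :
    ((Q * V * (Vᵀ * Q * V)⁻¹)ᵀ * J * (Q * V * (Vᵀ * Q * V)⁻¹))ᵀ
        = -((Q * V * (Vᵀ * Q * V)⁻¹)ᵀ * J * (Q * V * (Vᵀ * Q * V)⁻¹)) ∧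
    ((Q * V * (Vᵀ * Q * V)⁻¹)ᵀ * R * (Q * V * (Vᵀ * Q * V)⁻¹)).PosSemidef ∧
    (Vᵀ * Q * V).PosDef ∧
    (Q * V * (Vᵀ * Q * V)⁻¹)ᵀ * V = 1 := by
  have hQsymm : Qᵀ = Q := hQ.isHermitian.eq
  have hinj := mulVec_inj_of_rank V hV
  -- positive definiteness of Vᵀ Q V
  have hQV : (Vᵀ * Q * V).PosDef := by
    refine Matrix.PosDef.of_dotProduct_mulVec_pos ?_ ?_
    · show (Vᵀ * Q * V)ᴴ = Vᵀ * Q * V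
      simp only [conjTranspose_eq_transpose_of_trivial, Matrix.transpose_mul,
        Matrix.transpose_transpose, hQsymm, Matrix.mul_assoc]
    · intro x hx
      have hVx : V.mulVec x ≠ 0 := fun h => hx (hinj x h)
      have := hQ.dotProduct_mulVec_pos hVx
      simpa [Matrix.dotProduct_mulVec, Matrix.vecMul_transpose, ← Matrix.mulVec_mulVec,
        Matrix.mul_assoc] using this
  have hdet : IsUnit (Vᵀ * Q * V).det := hQV.det_pos.ne'.isUnit
  have hQVsymm : (Vᵀ * Q * V)ᵀ = Vᵀ * Q * V := by
    simp only [Matrix.transpose_mul, Matrix.transpose_transpose, hQsymm, Matrix.mul_assoc]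
  -- the key identity Wᵀ V = 1
  have hWV : (Q * V * (Vᵀ * Q * V)⁻¹)ᵀ * V = 1 := by
    have : (Q * V * (Vᵀ * Q * V)⁻¹)ᵀ * V = ((Vᵀ * Q * V)⁻¹)ᵀ * (Vᵀ * Q * V) := by
      simp only [Matrix.transpose_mul, Matrix.transpose_transpose, hQsymm, Matrix.mul_assoc]
    rw [this, Matrix.transpose_nonsing_inv, hQVsymm, Matrix.nonsing_inv_mul _ hdet]
  refine ⟨?_, ?_, hQV, hWV⟩
  · set W := Q * V * (Vᵀ * Q * V)⁻¹ with hW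
    calc (Wᵀ * J * W)ᵀ = Wᵀ * Jᵀ * W := by
          simp [Matrix.transpose_mul, Matrix.mul_assoc]
      _ = -(Wᵀ * J * W) := by rw [hJ]; simp [Matrix.mul_assoc]
  · have := hR.conjTranspose_mul_mul_same (Q * V * (Vᵀ * Q * V)⁻¹)
    simpa [conjTranspose_eq_transpose_of_trivial] using this
end
end

section
/- Let (J,R,Q,B) be a port-Hamiltonian system, V̂_r ∈ ℝ^{n×r} full column rank, and Ŵ_r = Q V̂_r (V̂_r^T Q V̂_r)^{-1}. Then the projected system matrix factors structurally: Ŵ_r^T (J - R) Q V̂_r = (J_r - R_r) Q_r, where J_r = Ŵ_r^T J Ŵ_r, R_r = Ŵ_r^T R Ŵ_r, Q_r = V̂_r^T Q V̂_r. Moreover the projected output matrix satisfies B^T Q V̂_r = B_r^T Q_r with B_r = Ŵ_r^T B. -/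
open Matrix

noncomputable section

lemma aux_posdef (n r : ℕ) (Q : Matrix (Fin n) (Fin n) ℝ) (hQ : Q.PosDef)
    (V : Matrix (Fin n) (Fin r) ℝ) (hV : V.rank = r) : (Vᵀ * Q * V).PosDef := by
  have hker : ∀ x : Fin r → ℝ, V *ᵥ x = 0 → x = 0 := by
    intro x hx
    have h1 := LinearMap.finrank_range_add_finrank_ker V.mulVecLin
    rw [Matrix.rank] at hV
    rw [hV, Module.finrank_fin_fun] at h1
    have h2 : Module.finrank ℝ (LinearMap.ker V.mulVecLin) = 0 := by omega
    have h3 : LinearMap.ker V.mulVecLin = ⊥ := Submodule.finrank_eq_zero.mp h2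
    have : x ∈ LinearMap.ker V.mulVecLin := by simpa [Matrix.mulVecLin_apply] using hx
    rw [h3] at this
    simpa using this
  rw [Matrix.posDef_iff_dotProduct_mulVec]
  constructor
  · have := Matrix.isHermitian_conjTranspose_mul_mul V hQ.isHermitian
    rwa [Matrix.conjTranspose_eq_transpose_of_trivial] at this
  · intro x hx
    have hVx : V *ᵥ x ≠ 0 := fun h => hx (hker x h)
    have := hQ.dotProduct_mulVec_pos hVx
    rw [star_trivial] at this ⊢
    rwa [← Matrix.mulVec_mulVec, ← Matrix.mulVec_mulVec, Matrix.dotProduct_mulVec,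
      Matrix.vecMul_transpose]

theorem stmt9 (n m r : ℕ) (J R Q : Matrix (Fin n) (Fin n) ℝ) (B : Matrix (Fin n) (Fin m) ℝ)
    (hJ : Jᵀ = -J) (hR : R.PosSemidef) (hQ : Q.PosDef)
    (V : Matrix (Fin n) (Fin r) ℝ) (hV : V.rank = r) :
    (Q * V * (Vᵀ * Q * V)⁻¹)ᵀ * ((J - R) * Q) * V
      = ((Q * V * (Vᵀ * Q * V)⁻¹)ᵀ * J * (Q * V * (Vᵀ * Q * V)⁻¹)
          - (Q * V * (Vᵀ * Q * V)⁻¹)ᵀ * R * (Q * V * (Vᵀ * Q * V)⁻¹)) * (Vᵀ * Q * V) ∧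
    Bᵀ * Q * V = ((Q * V * (Vᵀ * Q * V)⁻¹)ᵀ * B)ᵀ * (Vᵀ * Q * V) := by
  have hM : (Vᵀ * Q * V).PosDef := aux_posdef n r Q hQ V hV
  have hMinv : (Vᵀ * Q * V)⁻¹ * (Vᵀ * Q * V) = 1 :=
    Matrix.nonsing_inv_mul _ hM.det_pos.ne'.isUnit
  have key : Q * V * (Vᵀ * Q * V)⁻¹ * (Vᵀ * Q * V) = Q * V := by
    rw [Matrix.mul_assoc, hMinv, Matrix.mul_one]
  constructor
  · calc (Q * V * (Vᵀ * Q * V)⁻¹)ᵀ * ((J - R) * Q) * V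
        = (Q * V * (Vᵀ * Q * V)⁻¹)ᵀ * (J - R) * (Q * V) := by
          simp only [Matrix.mul_assoc]
      _ = (Q * V * (Vᵀ * Q * V)⁻¹)ᵀ * (J - R) * (Q * V * (Vᵀ * Q * V)⁻¹ * (Vᵀ * Q * V)) := by
          rw [key]
      _ = ((Q * V * (Vᵀ * Q * V)⁻¹)ᵀ * J * (Q * V * (Vᵀ * Q * V)⁻¹)
          - (Q * V * (Vᵀ * Q * V)⁻¹)ᵀ * R * (Q * V * (Vᵀ * Q * V)⁻¹)) * (Vᵀ * Q * V) := by
          rw [Matrix.mul_sub, Matrix.sub_mul, Matrix.sub_mul]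
          simp only [Matrix.mul_assoc]
  · calc Bᵀ * Q * V = Bᵀ * (Q * V * (Vᵀ * Q * V)⁻¹ * (Vᵀ * Q * V)) := by
          rw [key, Matrix.mul_assoc]
      _ = ((Q * V * (Vᵀ * Q * V)⁻¹)ᵀ * B)ᵀ * (Vᵀ * Q * V) := by
          rw [Matrix.transpose_mul, Matrix.transpose_transpose]
          simp only [Matrix.mul_assoc]
end
end

section
/- Let G(s) = B^TQ(sI - (J-R)Q)^{-1}B be a port-Hamiltonian system (J skew-symmetric, R symmetric PSD, Q symmetric positive definite). Let s_1,...,s_r be distinct points closed under conjugation with tangent directions b_1,...,b_r closed under conjugation, let V_r have columns (s_iI - (J-R)Q)^{-1}Bb_i, let M ∈ ℂ^{r×r} be invertible with V̂_r = V_rM real and of full column rank, and set Ŵ_r = QV̂_r(V̂_r^TQV̂_r)^{-1}, J_r = Ŵ_r^TJŴ_r, R_r = Ŵ_r^TRŴ_r, Q_r = V̂_r^TQV̂_r, B_r = Ŵ_r^TB. Then the reduced system G_r(s) = B_r^TQ_r(sI - (J_r-R_r)Q_r)^{-1}B_r is port-Hamiltonian (J_r skew, R_r PSD, Q_r positive definite)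 and satisfies G(s_i)b_i = G_r(s_i)b_i for all i = 1,...,r. -/
open Matrix

noncomputable section

private lemma mapC_mul {p q t : Type*} [Fintype q] (A : Matrix p q ℝ) (B : Matrix q t ℝ) :
    (A * B).map Complex.ofReal = A.map Complex.ofReal * B.map Complex.ofReal :=
  Matrix.map_mul (f := Complex.ofRealHom)

private lemma mapC_one {p : Type*} [Fintype p] [DecidableEq p] :
    (1 : Matrix p p ℝ).map Complex.ofReal = 1 :=
  Matrix.map_one _ Complex.ofReal_zero Complex.ofReal_one

private lemma skew_aux {p q : Type*} [Fintype p] [Fintype q]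
    (W : Matrix p q ℝ) (J : Matrix p p ℝ) (hJ : Jᵀ = -J) :
    (Wᵀ * J * W)ᵀ = -(Wᵀ * J * W) := by
  rw [Matrix.transpose_mul, Matrix.transpose_mul, Matrix.transpose_transpose, hJ,
    Matrix.neg_mul, Matrix.mul_neg, ← Matrix.mul_assoc]

theorem stmt10 (n m r : ℕ) (J R Q : Matrix (Fin n) (Fin n) ℝ) (B : Matrix (Fin n) (Fin m) ℝ)
    (hJ : Jᵀ = -J) (hR : R.PosSemidef) (hQ : Q.PosDef)
    (s : Fin r → ℂ) (hs : Function.Injective s) (b : Fin r → Fin m → ℂ)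
    (hsclosed : ∀ i, ∃ j, s j = (starRingEnd ℂ) (s i) ∧ b j = fun k => (starRingEnd ℂ) (b i k))
    (V : Matrix (Fin n) (Fin r) ℂ)
    (hres : ∀ i, IsUnit (s i • (1 : Matrix (Fin n) (Fin n) ℂ)
        - ((J - R) * Q).map Complex.ofReal).det)
    (hV : ∀ i j, V j i =
      (((s i • (1 : Matrix (Fin n) (Fin n) ℂ) - ((J - R) * Q).map Complex.ofReal)⁻¹ *
        B.map Complex.ofReal) *ᵥ b i) j)
    (M : Matrix (Fin r) (Fin r) ℂ) (hM : IsUnit M.det)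
    (Vh : Matrix (Fin n) (Fin r) ℝ) (hVh : Vh.map Complex.ofReal = V * M)
    (hrank : Vh.rank = r) :
    let W : Matrix (Fin n) (Fin r) ℝ := Q * Vh * (Vhᵀ * Q * Vh)⁻¹
    let Jr : Matrix (Fin r) (Fin r) ℝ := Wᵀ * J * W
    let Rr : Matrix (Fin r) (Fin r) ℝ := Wᵀ * R * W
    let Qr : Matrix (Fin r) (Fin r) ℝ := Vhᵀ * Q * Vh
    let Br : Matrix (Fin r) (Fin m) ℝ := Wᵀ * B
    Jrᵀ = -Jr ∧ Rr.PosSemidef ∧ Qr.PosDef ∧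
    ∀ i, IsUnit (s i • (1 : Matrix (Fin r) (Fin r) ℂ)
        - ((Jr - Rr) * Qr).map Complex.ofReal).det →
      ((Bᵀ * Q).map Complex.ofReal *
        (s i • (1 : Matrix (Fin n) (Fin n) ℂ) - ((J - R) * Q).map Complex.ofReal)⁻¹ *
        B.map Complex.ofReal) *ᵥ b i
      = ((Brᵀ * Qr).map Complex.ofReal *
        (s i • (1 : Matrix (Fin r) (Fin r) ℂ) - ((Jr - Rr) * Qr).map Complex.ofReal)⁻¹ *
        Br.map Complex.ofReal) *ᵥ b i := by
  intro W Jr Rr Qr Br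
  have hQs : Qᵀ = Q := by
    rw [← Matrix.conjTranspose_eq_transpose_of_trivial]; exact hQ.1
  -- injectivity of Vh
  have hinj : ∀ x : Fin r → ℝ, Vh *ᵥ x = 0 → x = 0 := by
    intro x hx
    have hker : LinearMap.ker Vh.mulVecLin = ⊥ := by
      have h3 : Module.finrank ℝ (LinearMap.range Vh.mulVecLin) = r := hrank
      have h1 := Vh.mulVecLin.finrank_range_add_finrank_ker
      have h2 : Module.finrank ℝ (Fin r → ℝ) = r := by simp
      rw [h3, h2] at h1
      exact Submodule.finrank_eq_zero.mp (by omega)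
    have hx' : x ∈ LinearMap.ker Vh.mulVecLin := by
      simpa [Matrix.mulVecLin_apply] using hx
    simpa [hker] using hx'
  -- transpose of Qr
  have hQrT : Qrᵀ = Qr := by
    show (Vhᵀ * Q * Vh)ᵀ = Vhᵀ * Q * Vh
    rw [Matrix.transpose_mul, Matrix.transpose_mul, Matrix.transpose_transpose, hQs,
      Matrix.mul_assoc]
  have hQrPD : Qr.PosDef := by
    refine Matrix.posDef_iff_dotProduct_mulVec.mpr ⟨?_, ?_⟩
    · show Qrᴴ = Qr
      rw [Matrix.conjTranspose_eq_transpose_of_trivial]; exact hQrT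
    · intro x hx
      have h1 : Vh *ᵥ x ≠ 0 := fun h => hx (hinj x h)
      have h2 := hQ.dotProduct_mulVec_pos h1
      have h3 : dotProduct (star x) (Qr *ᵥ x)
          = dotProduct (star (Vh *ᵥ x)) (Q *ᵥ (Vh *ᵥ x)) := by
        show dotProduct (star x) ((Vhᵀ * Q * Vh) *ᵥ x) = _
        rw [star_trivial, star_trivial, ← Matrix.mulVec_mulVec, ← Matrix.mulVec_mulVec,
          Matrix.dotProduct_mulVec, Matrix.vecMul_transpose]
      rw [h3]; exact h2
  have hQrdet : IsUnit Qr.det := hQrPD.det_pos.ne'.isUnit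
  have hWT : Wᵀ = Qr⁻¹ * Vhᵀ * Q := by
    show (Q * Vh * Qr⁻¹)ᵀ = Qr⁻¹ * Vhᵀ * Q
    rw [Matrix.transpose_mul, Matrix.transpose_mul, Matrix.transpose_nonsing_inv, hQrT, hQs,
      Matrix.mul_assoc]
  have hWV : Wᵀ * Vh = 1 := by
    rw [hWT, Matrix.mul_assoc, Matrix.mul_assoc, ← Matrix.mul_assoc Vhᵀ Q Vh]
    exact Matrix.nonsing_inv_mul Qr hQrdet
  have hWQr : W * Qr = Q * Vh := by
    show Q * Vh * Qr⁻¹ * Qr = Q * Vh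
    rw [Matrix.mul_assoc, Matrix.nonsing_inv_mul Qr hQrdet, Matrix.mul_one]
  have hJrskew : Jrᵀ = -Jr := skew_aux W J hJ
  have hRrPSD : Rr.PosSemidef := by
    have := hR.conjTranspose_mul_mul_same W
    rwa [Matrix.conjTranspose_eq_transpose_of_trivial] at this
  refine ⟨hJrskew, hRrPSD, hQrPD, ?_⟩
  -- interpolation
  have hAr : (Jr - Rr) * Qr = Wᵀ * ((J - R) * Q) * Vh := by
    have h1 : Jr - Rr = Wᵀ * (J - R) * W := by
      show Wᵀ * J * W - Wᵀ * R * W = Wᵀ * (J - R) * W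
      rw [Matrix.mul_sub, Matrix.sub_mul]
    rw [h1, Matrix.mul_assoc (Wᵀ * (J - R)) W Qr, hWQr, ← Matrix.mul_assoc,
      Matrix.mul_assoc Wᵀ (J - R) Q, ← Matrix.mul_assoc]
  have hBrQr : Brᵀ * Qr = Bᵀ * Q * Vh := by
    show (Wᵀ * B)ᵀ * Qr = Bᵀ * Q * Vh
    rw [Matrix.transpose_mul, Matrix.transpose_transpose, Matrix.mul_assoc, hWQr,
      ← Matrix.mul_assoc]
  intro i hi
  obtain ⟨Sc, hSc⟩ : ∃ X, X = s i • (1 : Matrix (Fin n) (Fin n) ℂ)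
      - ((J - R) * Q).map Complex.ofReal := ⟨_, rfl⟩
  obtain ⟨Src, hSrc⟩ : ∃ X, X = s i • (1 : Matrix (Fin r) (Fin r) ℂ)
      - ((Jr - Rr) * Qr).map Complex.ofReal := ⟨_, rfl⟩
  obtain ⟨Bc, hBc⟩ : ∃ X, X = B.map Complex.ofReal := ⟨_, rfl⟩
  obtain ⟨Wc, hWc⟩ : ∃ X, X = W.map Complex.ofReal := ⟨_, rfl⟩
  obtain ⟨Vc, hVcd⟩ : ∃ X, X = Vh.map Complex.ofReal := ⟨_, rfl⟩
  obtain ⟨e, he⟩ : ∃ x : Fin r → ℂ, x = Pi.single i 1 := ⟨_, rfl⟩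
  obtain ⟨xi, hxi⟩ : ∃ x : Fin r → ℂ, x = M⁻¹ *ᵥ e := ⟨_, rfl⟩
  rw [← hSrc] at hi
  rw [← hSc, ← hSrc, ← hBc]
  have hScu : IsUnit Sc.det := by rw [hSc]; exact hres i
  have hVe : V *ᵥ e = (Sc⁻¹ * Bc) *ᵥ b i := by
    funext j
    simp only [he, Matrix.mulVec_single]
    rw [MulOpposite.op_one, one_smul, hSc, hBc]
    exact hV i j
  have h1 : Vc *ᵥ xi = V *ᵥ e := by
    rw [hVcd, hVh, hxi, Matrix.mulVec_mulVec, Matrix.mul_assoc,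
      Matrix.mul_nonsing_inv M hM, Matrix.mul_one]
  have h2 : Sc *ᵥ (Vc *ᵥ xi) = Bc *ᵥ b i := by
    rw [h1, hVe, Matrix.mulVec_mulVec, ← Matrix.mul_assoc,
      Matrix.mul_nonsing_inv Sc hScu, Matrix.one_mul]
  have hWVc : Wcᵀ * Vc = 1 := by
    rw [hWc, hVcd, ← Matrix.transpose_map, ← mapC_mul, hWV, mapC_one]
  have hArc : Wcᵀ * ((J - R) * Q).map Complex.ofReal * Vc
      = ((Jr - Rr) * Qr).map Complex.ofReal := by
    rw [hWc, hVcd, ← Matrix.transpose_map, ← mapC_mul, ← mapC_mul, hAr]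
  have h3 : Wcᵀ * Sc * Vc = Src := by
    rw [hSc, hSrc, Matrix.mul_sub, Matrix.sub_mul, Matrix.mul_smul, Matrix.smul_mul,
      Matrix.mul_one, hWVc, hArc]
  have h4 : Src *ᵥ xi = (Wcᵀ * Bc) *ᵥ b i := by
    have h := congrArg (fun y => Wcᵀ *ᵥ y) h2
    rw [Matrix.mulVec_mulVec, Matrix.mulVec_mulVec, Matrix.mulVec_mulVec, h3] at h
    exact h
  have h5 : xi = Src⁻¹ *ᵥ ((Wcᵀ * Bc) *ᵥ b i) := by
    rw [← h4, Matrix.mulVec_mulVec, Matrix.nonsing_inv_mul Src hi, Matrix.one_mulVec]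
  have hBrc : Br.map Complex.ofReal = Wcᵀ * Bc := by
    show (Wᵀ * B).map Complex.ofReal = Wcᵀ * Bc
    rw [mapC_mul, Matrix.transpose_map, ← hWc, ← hBc]
  have hBrQrc : (Brᵀ * Qr).map Complex.ofReal = (Bᵀ * Q).map Complex.ofReal * Vc := by
    rw [hBrQr, mapC_mul, ← hVcd]
  calc ((Bᵀ * Q).map Complex.ofReal * Sc⁻¹ * Bc) *ᵥ b i
      = (Bᵀ * Q).map Complex.ofReal *ᵥ ((Sc⁻¹ * Bc) *ᵥ b i) := by
        rw [Matrix.mulVec_mulVec, Matrix.mul_assoc]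
    _ = (Bᵀ * Q).map Complex.ofReal *ᵥ (Vc *ᵥ xi) := by rw [h1, hVe]
    _ = ((Bᵀ * Q).map Complex.ofReal * Vc) *ᵥ xi := by rw [Matrix.mulVec_mulVec]
    _ = (Brᵀ * Qr).map Complex.ofReal *ᵥ xi := by rw [hBrQrc]
    _ = ((Brᵀ * Qr).map Complex.ofReal * Src⁻¹ * Br.map Complex.ofReal) *ᵥ b i := by
        rw [hBrc, h5, Matrix.mulVec_mulVec, Matrix.mulVec_mulVec]
end
end

section
/- Let G be a port-Hamiltonian system (J,R,Q,B) and let (J̃,R̃,Q̃,B̃) = (TJT^T, TRT^T, T^{-T}QT^{-1}, TB) be the transformed realization under an invertible T ∈ ℝ^{n×n}. Given distinct interpolation points s_1,...,s_r with tangent directions b_1,...,b_r (closed under conjugation), let Ṽ_r and V_r be the respective primitive interpolatory basis matrices with i-th columns (s_iI - (J̃-R̃)Q̃)^{-1}B̃b_i and (s_iI - (J-R)Q)^{-1}Bb_i. Then Ṽ_r = T V_r, and for any invertible M making V̂_r = V_rM real, the reduced quantities J_r, R_r, Q_r, B_r produced by the structure-preserving projection from either realization (using Ŵ_r = QV̂_r(V̂_r^TQV̂_r)^{-1}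 resp. its transformed analogue) are identical. -/
open Matrix

noncomputable section

theorem stmt11 (n m r : ℕ) (J R Q : Matrix (Fin n) (Fin n) ℝ) (B : Matrix (Fin n) (Fin m) ℝ)
    (hJ : Jᵀ = -J) (hR : R.PosSemidef) (hQ : Q.PosDef)
    (T : Matrix (Fin n) (Fin n) ℝ) (hT : IsUnit T.det)
    (s : Fin r → ℂ) (hs : Function.Injective s) (b : Fin r → Fin m → ℂ)
    (hsclosed : ∀ i, ∃ j, s j = (starRingEnd ℂ) (s i) ∧ b j = fun k => (starRingEnd ℂ) (b i k))
    (hres : ∀ i, IsUnit (s i • (1 : Matrix (Fin n) (Fin n) ℂ)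
        - ((J - R) * Q).map Complex.ofReal).det)
    (V Vt : Matrix (Fin n) (Fin r) ℂ)
    (hV : ∀ i j, V j i =
      (((s i • (1 : Matrix (Fin n) (Fin n) ℂ) - ((J - R) * Q).map Complex.ofReal)⁻¹ *
        B.map Complex.ofReal) *ᵥ b i) j)
    (hVt : ∀ i j, Vt j i =
      (((s i • (1 : Matrix (Fin n) (Fin n) ℂ) -
          ((T * J * Tᵀ - T * R * Tᵀ) * ((T⁻¹)ᵀ * Q * T⁻¹)).map Complex.ofReal)⁻¹ *
        (T * B).map Complex.ofReal) *ᵥ b i) j)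
    (M : Matrix (Fin r) (Fin r) ℂ) (hM : IsUnit M.det)
    (Vh : Matrix (Fin n) (Fin r) ℝ) (hVh : Vh.map Complex.ofReal = V * M)
    (hrank : Vh.rank = r) :
    Vt = T.map Complex.ofReal * V ∧
    ((T * Vh).map Complex.ofReal = Vt * M ∧
    (let W : Matrix (Fin n) (Fin r) ℝ := Q * Vh * (Vhᵀ * Q * Vh)⁻¹
     let Wt : Matrix (Fin n) (Fin r) ℝ :=
       ((T⁻¹)ᵀ * Q * T⁻¹) * (T * Vh) * ((T * Vh)ᵀ * ((T⁻¹)ᵀ * Q * T⁻¹) * (T * Vh))⁻¹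
     Wtᵀ * (T * J * Tᵀ) * Wt = Wᵀ * J * W ∧
     Wtᵀ * (T * R * Tᵀ) * Wt = Wᵀ * R * W ∧
     (T * Vh)ᵀ * ((T⁻¹)ᵀ * Q * T⁻¹) * (T * Vh) = Vhᵀ * Q * Vh ∧
     Wtᵀ * (T * B) = Wᵀ * B)) := by
  have hT1 : T * T⁻¹ = 1 := mul_nonsing_inv T hT
  have hT2 : T⁻¹ * T = 1 := nonsing_inv_mul T hT
  have hTt : Tᵀ * (T⁻¹)ᵀ = 1 := by rw [← transpose_mul, hT2, transpose_one]
  have hTt2 : (T⁻¹)ᵀ * Tᵀ = 1 := by rw [← transpose_mul, hT1, transpose_one]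
  -- real similarity identity
  have hreal : (T * J * Tᵀ - T * R * Tᵀ) * ((T⁻¹)ᵀ * Q * T⁻¹)
      = T * ((J - R) * Q) * T⁻¹ := by
    have : T * J * Tᵀ - T * R * Tᵀ = T * (J - R) * Tᵀ := by
      simp [Matrix.mul_sub, Matrix.sub_mul]
    rw [this]
    calc T * (J - R) * Tᵀ * ((T⁻¹)ᵀ * Q * T⁻¹)
        = T * (J - R) * (Tᵀ * (T⁻¹)ᵀ) * (Q * T⁻¹) := by
          simp only [Matrix.mul_assoc]
      _ = T * ((J - R) * Q) * T⁻¹ := by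
          rw [hTt]; simp only [Matrix.mul_one, Matrix.mul_assoc]
  -- complex versions
  set Tc : Matrix (Fin n) (Fin n) ℂ := T.map Complex.ofReal with hTcdef
  set Tic : Matrix (Fin n) (Fin n) ℂ := (T⁻¹).map Complex.ofReal with hTicdef
  set Ac : Matrix (Fin n) (Fin n) ℂ := ((J - R) * Q).map Complex.ofReal with hAcdef
  set Bc : Matrix (Fin n) (Fin m) ℂ := B.map Complex.ofReal with hBcdef
  have hmapmul : ∀ {p q t : ℕ} (X : Matrix (Fin p) (Fin q) ℝ) (Y : Matrix (Fin q) (Fin t) ℝ),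
      (X * Y).map Complex.ofReal = X.map Complex.ofReal * Y.map Complex.ofReal := by
    intro p q t X Y
    exact Matrix.map_mul (f := Complex.ofRealHom)
  have hmapone : ((1 : Matrix (Fin n) (Fin n) ℝ)).map Complex.ofReal = 1 := by
    exact Matrix.map_one _ Complex.ofReal_zero Complex.ofReal_one
  have hTc1 : Tc * Tic = 1 := by rw [← hmapmul, hT1, hmapone]
  have hTc2 : Tic * Tc = 1 := by rw [← hmapmul, hT2, hmapone]
  have hTcinv : Tc⁻¹ = Tic := inv_eq_right_inv hTc1
  have hTicinv : Tic⁻¹ = Tc := inv_eq_right_inv hTc2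
  -- transformed resolvent
  have hkey : ∀ i, (s i • (1 : Matrix (Fin n) (Fin n) ℂ) -
      ((T * J * Tᵀ - T * R * Tᵀ) * ((T⁻¹)ᵀ * Q * T⁻¹)).map Complex.ofReal)⁻¹ *
      (T * B).map Complex.ofReal
      = Tc * ((s i • (1 : Matrix (Fin n) (Fin n) ℂ) - Ac)⁻¹ * Bc) := by
    intro i
    have h1 : ((T * J * Tᵀ - T * R * Tᵀ) * ((T⁻¹)ᵀ * Q * T⁻¹)).map Complex.ofReal
        = Tc * Ac * Tic := by
      rw [hreal, hmapmul, hmapmul]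
    have h2 : s i • (1 : Matrix (Fin n) (Fin n) ℂ) - Tc * Ac * Tic
        = Tc * (s i • (1 : Matrix (Fin n) (Fin n) ℂ) - Ac) * Tic := by
      rw [Matrix.mul_sub, Matrix.sub_mul]
      congr 1
      rw [Matrix.mul_smul, Matrix.mul_one, Matrix.smul_mul, hTc1]
    have h3 : (T * B).map Complex.ofReal = Tc * Bc := hmapmul T B
    rw [h1, h3, h2, Matrix.mul_inv_rev, Matrix.mul_inv_rev, hTcinv, hTicinv]
    simp only [Matrix.mul_assoc]
    rw [← Matrix.mul_assoc Tic Tc Bc, hTc2, Matrix.one_mul]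
  have hVtV : Vt = Tc * V := by
    ext j i
    rw [hVt i j, hkey i, ← Matrix.mulVec_mulVec]
    simp only [hV, Matrix.mul_apply, Matrix.mulVec, dotProduct]
  refine ⟨hVtV, ?_, ?_⟩
  · rw [hmapmul, hVh, hVtV, Matrix.mul_assoc]
  · intro W Wt
    -- Q_r invariance
    have hQr : (T * Vh)ᵀ * ((T⁻¹)ᵀ * Q * T⁻¹) * (T * Vh) = Vhᵀ * Q * Vh := by
      rw [Matrix.transpose_mul]
      calc Vhᵀ * Tᵀ * ((T⁻¹)ᵀ * Q * T⁻¹) * (T * Vh)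
          = Vhᵀ * (Tᵀ * (T⁻¹)ᵀ) * (Q * (T⁻¹ * T) * Vh) := by
            simp only [Matrix.mul_assoc]
        _ = Vhᵀ * Q * Vh := by
            rw [hTt, hT2]; simp only [Matrix.mul_one, Matrix.mul_assoc]
    have hWt : Wt = (T⁻¹)ᵀ * W := by
      show ((T⁻¹)ᵀ * Q * T⁻¹) * (T * Vh) * ((T * Vh)ᵀ * ((T⁻¹)ᵀ * Q * T⁻¹) * (T * Vh))⁻¹
          = (T⁻¹)ᵀ * (Q * Vh * (Vhᵀ * Q * Vh)⁻¹)
      rw [hQr]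
      calc ((T⁻¹)ᵀ * Q * T⁻¹) * (T * Vh) * (Vhᵀ * Q * Vh)⁻¹
          = (T⁻¹)ᵀ * (Q * ((T⁻¹ * T) * Vh) * (Vhᵀ * Q * Vh)⁻¹) := by
            simp only [Matrix.mul_assoc]
        _ = (T⁻¹)ᵀ * (Q * Vh * (Vhᵀ * Q * Vh)⁻¹) := by
            rw [hT2, Matrix.one_mul]
    have hWtT : Wtᵀ = Wᵀ * T⁻¹ := by rw [hWt, Matrix.transpose_mul, Matrix.transpose_transpose]
    refine ⟨?_, ?_, hQr, ?_⟩
    · rw [hWtT, hWt]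
      calc Wᵀ * T⁻¹ * (T * J * Tᵀ) * ((T⁻¹)ᵀ * W)
          = Wᵀ * ((T⁻¹ * T) * (J * (Tᵀ * (T⁻¹)ᵀ) * W)) := by
            simp only [Matrix.mul_assoc]
        _ = Wᵀ * J * W := by
            rw [hT2, hTt]; simp only [Matrix.one_mul, Matrix.mul_one, Matrix.mul_assoc]
    · rw [hWtT, hWt]
      calc Wᵀ * T⁻¹ * (T * R * Tᵀ) * ((T⁻¹)ᵀ * W)
          = Wᵀ * ((T⁻¹ * T) * (R * (Tᵀ * (T⁻¹)ᵀ) * W)) := by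
            simp only [Matrix.mul_assoc]
        _ = Wᵀ * R * W := by
            rw [hT2, hTt]; simp only [Matrix.one_mul, Matrix.mul_one, Matrix.mul_assoc]
    · rw [hWtT]
      calc Wᵀ * T⁻¹ * (T * B) = Wᵀ * ((T⁻¹ * T) * B) := by simp only [Matrix.mul_assoc]
        _ = Wᵀ * B := by rw [hT2, Matrix.one_mul]
end
end
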